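/- For any L > 0, any convex continuously differentiable function f : ℝⁿ → ℝ whose gradient is L-Lipschitz, and any initial point x₀ ∈ ℝⁿ, the ODE Ẍ(t) + (3/t)Ẋ(t) + ∇f(X(t)) = 0 for t > 0, with initial conditions X(0) = x₀ and Ẋ(0) = 0, has a unique global solution X : [0,∞) → ℝⁿ that is twice continuously differentiable on (0,∞) and continuously differentiable on [0,∞). -/

import Mathlib

open Set Filter Topology

noncomputable section

/-- `ℝⁿ` as a Euclidean space. -/
abbrev E (n : ℕ) := EuclideanSpace ℝ (Fin n)

/-- The class `F_L`: convex, continuously differentiable functions whose gradient is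
`L`-Lipschitz. -/
def MemFL (n : ℕ) (L : ℝ) (f : E n → ℝ) : Prop :=
  ConvexOn ℝ Set.univ f ∧ ContDiff ℝ 1 f ∧
    ∀ x y, ‖gradient f x - gradient f y‖ ≤ L * ‖x - y‖

/-- A solution of the Nesterov ODE `Ẍ + (3/t)Ẋ + ∇f(X) = 0`, `X(0) = x₀`, `Ẋ(0) = 0`:
a curve which is C¹ on `[0,∞)`, C² on `(0,∞)`, with vanishing right derivative at `0`,
satisfying the equation for every `t > 0`. -/
def NesterovSol (n : ℕ) (f : E n → ℝ) (x0 : E n) (X : ℝ → E n) : Prop :=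
  X 0 = x0 ∧
  ContDiffOn ℝ 1 X (Set.Ici 0) ∧
  ContDiffOn ℝ 2 X (Set.Ioi 0) ∧
  derivWithin X (Set.Ici 0) 0 = 0 ∧
  ∀ t > (0:ℝ), deriv (deriv X) t + (3 / t) • deriv X t + gradient f (X t) = 0

open intervalIntegral MeasureTheory

namespace Nest

def nK (t s : ℝ) : ℝ := (s - s^3/t^2)/2

lemma abs_le_abs_of_uIoc {t s : ℝ} (hs : s ∈ Set.uIoc 0 t) : |s| ≤ |t| := by
  rcases Set.mem_uIoc.1 hs with h | h
  · rw [abs_of_pos h.1, abs_of_nonneg (le_trans h.1.le h.2)]; exact h.2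
  · rw [abs_of_nonpos h.2, abs_of_neg (lt_of_lt_of_le h.1 h.2)]; linarith [h.1]

lemma abs_nK_le {t s : ℝ} (hs : s ∈ Set.uIoc 0 t) : |nK t s| ≤ |s| := by
  have hst : |s| ≤ |t| := by
    rcases Set.mem_uIoc.1 hs with h | h
    · rw [abs_of_pos h.1, abs_of_nonneg (le_trans h.1.le h.2)]; exact h.2
    · rw [abs_of_nonpos h.2, abs_of_neg (lt_of_lt_of_le h.1 h.2)]; linarith [h.1]
  have ht : t ≠ 0 := by
    rcases Set.mem_uIoc.1 hs with h | h
    · exact fun h0 => absurd (h0 ▸ h.2) (not_le.2 h.1)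
    · exact fun h0 => absurd h.1 (by simp [h0, h.2.trans_lt, not_lt]; nlinarith [h.2])
  have h2 : |s^3/t^2| ≤ |s| := by
    rw [abs_div, abs_pow, abs_pow, sq_abs]
    rw [div_le_iff₀ (by positivity : (0:ℝ) < t^2)]
    calc |s|^3 = |s| * |s|^2 := by ring
    _ ≤ |s| * t^2 := by
        apply mul_le_mul_of_nonneg_left _ (abs_nonneg s)
        calc |s|^2 ≤ |t|^2 := by apply pow_le_pow_left₀ (abs_nonneg s) hst
        _ = t^2 := sq_abs t
  calc |nK t s| = |s - s^3/t^2|/2 := by rw [nK, abs_div]; norm_num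
  _ ≤ (|s| + |s^3/t^2|)/2 := by gcongr; exact abs_sub _ _
  _ ≤ (|s| + |s|)/2 := by linarith
  _ = |s| := by ring

variable {n : ℕ} (g : E n → E n) (x₀ : E n)

def psi (Y : ℝ → E n) (t : ℝ) : E n := x₀ - ∫ s in (0:ℝ)..t, nK t s • g (Y s)

def primA (Y : ℝ → E n) (t : ℝ) : E n := ∫ s in (0:ℝ)..t, s • g (Y s)
def primB (Y : ℝ → E n) (t : ℝ) : E n := ∫ s in (0:ℝ)..t, s^3 • g (Y s)

lemma primA_integrable (hg : Continuous g) {Y : ℝ → E n} (hY : Continuous Y) (a b : ℝ) :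
    IntervalIntegrable (fun s => s • g (Y s)) volume a b :=
  ((continuous_id.smul (hg.comp hY)).continuousOn).intervalIntegrable

lemma primB_integrable (hg : Continuous g) {Y : ℝ → E n} (hY : Continuous Y) (a b : ℝ) :
    IntervalIntegrable (fun s => s^3 • g (Y s)) volume a b :=
  (((continuous_pow 3).smul (hg.comp hY)).continuousOn).intervalIntegrable

lemma cont_primA (hg : Continuous g) {Y : ℝ → E n} (hY : Continuous Y) :
    Continuous (primA g Y) :=
  intervalIntegral.continuous_primitive (fun a b => primA_integrable g hg hY a b) 0

lemma cont_primB (hg : Continuous g) {Y : ℝ → E n} (hY : Continuous Y) :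
    Continuous (primB g Y) :=
  intervalIntegral.continuous_primitive (fun a b => primB_integrable g hg hY a b) 0

lemma psi_eq (hg : Continuous g) {Y : ℝ → E n} (hY : Continuous Y) {t : ℝ} (ht : t ≠ 0) :
    psi g x₀ Y t = x₀ - (2:ℝ)⁻¹ • primA g Y t + (2*t^2)⁻¹ • primB g Y t := by
  have h1 : ∀ s : ℝ, nK t s • g (Y s)
      = ((2:ℝ)⁻¹ * s) • g (Y s) - ((2*t^2)⁻¹ * s^3) • g (Y s) := by
    intro s
    rw [← sub_smul]; congr 1
    simp only [nK]; field_simp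
  unfold psi
  rw [intervalIntegral.integral_congr (g := fun s => ((2:ℝ)⁻¹ * s) • g (Y s)
      - ((2*t^2)⁻¹ * s^3) • g (Y s)) (fun s _ => h1 s)]
  rw [intervalIntegral.integral_sub]
  · have e1 : ∀ s : ℝ, ((2:ℝ)⁻¹ * s) • g (Y s) = (2:ℝ)⁻¹ • (s • g (Y s)) := by
      intro s; rw [smul_smul]
    have e2 : ∀ s : ℝ, ((2*t^2)⁻¹ * s^3) • g (Y s) = (2*t^2)⁻¹ • (s^3 • g (Y s)) := by
      intro s; rw [smul_smul]
    simp_rw [e1, e2, intervalIntegral.integral_smul]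
    unfold primA primB; abel
  · have : Continuous fun s : ℝ => ((2:ℝ)⁻¹ * s) • g (Y s) := by fun_prop
    exact this.continuousOn.intervalIntegrable
  · have : Continuous fun s : ℝ => ((2*t^2)⁻¹ * s^3) • g (Y s) := by fun_prop
    exact this.continuousOn.intervalIntegrable

lemma psi_zero (Y : ℝ → E n) : psi g x₀ Y 0 = x₀ := by simp [psi]

lemma cont_psi (hg : Continuous g) {Y : ℝ → E n} (hY : Continuous Y) :
    Continuous (psi g x₀ Y) := by
  rw [continuous_iff_continuousAt]
  intro t₀
  by_cases ht₀ : t₀ = 0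
  · -- continuity at 0
    subst ht₀
    obtain ⟨M, hM⟩ := (isCompact_Icc (a := (-1:ℝ)) (b := 1)).exists_bound_of_continuousOn
      ((hg.comp hY).continuousOn)
    have hM0 : 0 ≤ M := le_trans (norm_nonneg _) (hM 0 (by norm_num))
    have key : ∀ t : ℝ, t ∈ Icc (-1:ℝ) 1 → ‖psi g x₀ Y t - x₀‖ ≤ M * |t| * |t| := by
      intro t ht
      have : psi g x₀ Y t - x₀ = -∫ s in (0:ℝ)..t, nK t s • g (Y s) := by unfold psi; abel
      rw [this, norm_neg]
      have := intervalIntegral.norm_integral_le_of_norm_le_const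
        (C := M * |t|) (f := fun s => nK t s • g (Y s)) (a := 0) (b := t) ?_
      · simpa using this.trans (le_of_eq (by ring))
      · intro s hs
        rw [norm_smul]
        have h1 : ‖nK t s‖ ≤ |s| := abs_nK_le hs
        have h2 : |s| ≤ |t| := abs_le_abs_of_uIoc hs
        have h3 : s ∈ Icc (-1:ℝ) 1 := by
          constructor
          · nlinarith [abs_le.1 (h2.trans (abs_le.2 ht)), (abs_le.1 (h2.trans (abs_le.2 ht))).1]
          · exact (abs_le.1 (h2.trans (abs_le.2 ht))).2
        calc ‖nK t s‖ * ‖g (Y s)‖ ≤ |t| * M :=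
              mul_le_mul (h1.trans h2) (hM s h3) (norm_nonneg _) (abs_nonneg _)
          _ = M * |t| := by ring
    have htend : Tendsto (fun t => psi g x₀ Y t - x₀) (𝓝 0) (𝓝 0) := by
      apply squeeze_zero_norm' (a := fun t => M * |t| * |t|)
      · filter_upwards [Icc_mem_nhds (by norm_num : (-1:ℝ) < 0) (by norm_num : (0:ℝ) < 1)]
          with t ht using key t ht
      · have : Continuous fun t : ℝ => M * |t| * |t| := by fun_prop
        simpa using this.tendsto 0
    have : Tendsto (psi g x₀ Y) (𝓝 0) (𝓝 x₀) := by
      have := htend.add (tendsto_const_nhds (x := x₀))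
      simpa using this
    simpa [ContinuousAt, psi_zero] using this
  · -- continuity away from 0
    have hopen : {t : ℝ | t ≠ 0} ∈ 𝓝 t₀ := isOpen_compl_singleton.mem_nhds ht₀
    have heq : psi g x₀ Y =ᶠ[𝓝 t₀]
        fun t => x₀ - (2:ℝ)⁻¹ • primA g Y t + (2*t^2)⁻¹ • primB g Y t :=
      eventually_of_mem hopen (fun t ht => psi_eq g x₀ hg hY ht)
    have hc : ContinuousAt
        (fun t => x₀ - (2:ℝ)⁻¹ • primA g Y t + (2*t^2)⁻¹ • primB g Y t) t₀ := by
      apply ContinuousAt.add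
      · exact (continuousAt_const.sub (((cont_primA g hg hY).continuousAt).fun_const_smul _))
      · apply ContinuousAt.fun_smul
        · exact ((continuous_const.mul (continuous_pow 2)).continuousAt).inv₀
            (by simpa using pow_ne_zero 2 ht₀)
        · exact (cont_primB g hg hY).continuousAt
    exact hc.congr heq.symm


lemma cont_nK (t : ℝ) : Continuous (fun s => nK t s) := by
  unfold nK; fun_prop

lemma psi_integrand_integrable (hg : Continuous g) {Y : ℝ → E n} (hY : Continuous Y)
    (t a b : ℝ) : IntervalIntegrable (fun s => nK t s • g (Y s)) volume a b :=
  (((cont_nK t).smul (hg.comp hY)).continuousOn).intervalIntegrable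

lemma norm_psi_sub_psi_le (hg : Continuous g) {Y Z : ℝ → E n} (hY : Continuous Y)
    (hZ : Continuous Z) {t : ℝ} (ht : 0 ≤ t) {φ : ℝ → ℝ} (hφ : ContinuousOn φ (Icc 0 t))
    (hb : ∀ s ∈ Icc 0 t, ‖g (Y s) - g (Z s)‖ ≤ φ s) :
    ‖psi g x₀ Y t - psi g x₀ Z t‖ ≤ ∫ s in (0:ℝ)..t, s * φ s := by
  have hIoc : Set.uIoc (0:ℝ) t = Ioc 0 t := uIoc_of_le ht
  have heq : psi g x₀ Y t - psi g x₀ Z t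
      = ∫ s in (0:ℝ)..t, nK t s • (g (Z s) - g (Y s)) := by
    unfold psi
    rw [sub_sub_sub_cancel_left, ← integral_sub (psi_integrand_integrable g hg hZ t 0 t)
      (psi_integrand_integrable g hg hY t 0 t)]
    congr 1; ext s; rw [smul_sub]
  rw [heq]
  have hint : IntervalIntegrable (fun s => s * φ s) volume 0 t := by
    apply ContinuousOn.intervalIntegrable
    rw [uIcc_of_le ht]; exact continuousOn_id.mul hφ
  have hbd : ∀ᵐ s ∂(volume.restrict (Set.uIoc (0:ℝ) t)),
      ‖nK t s • (g (Z s) - g (Y s))‖ ≤ s * φ s := by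
    rw [ae_restrict_iff' measurableSet_uIoc]
    refine ae_of_all _ fun s hs => ?_
    have hs' : s ∈ Ioc 0 t := hIoc ▸ hs
    have hs'' : s ∈ Icc 0 t := Ioc_subset_Icc_self hs'
    rw [norm_smul]
    calc ‖nK t s‖ * ‖g (Z s) - g (Y s)‖ ≤ |s| * φ s := by
          apply mul_le_mul (abs_nK_le hs) (norm_sub_rev (g (Y s)) (g (Z s)) ▸ hb s hs'')
            (norm_nonneg _) (abs_nonneg _)
      _ = s * φ s := by rw [abs_of_pos hs'.1]
  calc ‖∫ s in (0:ℝ)..t, nK t s • (g (Z s) - g (Y s))‖ ≤ |∫ s in (0:ℝ)..t, s * φ s| :=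
        intervalIntegral.norm_integral_le_abs_of_norm_le hbd hint
    _ = ∫ s in (0:ℝ)..t, s * φ s := by
        apply abs_of_nonneg
        apply intervalIntegral.integral_nonneg ht
        intro u hu
        exact mul_nonneg hu.1 ((norm_nonneg _).trans (hb u hu))

lemma norm_psi_sub_const_le (hg : Continuous g) {Y : ℝ → E n} (hY : Continuous Y)
    {t : ℝ} (ht : 0 ≤ t) {φ : ℝ → ℝ} (hφ : ContinuousOn φ (Icc 0 t))
    (hb : ∀ s ∈ Icc 0 t, ‖g (Y s)‖ ≤ φ s) :
    ‖psi g x₀ Y t - x₀‖ ≤ ∫ s in (0:ℝ)..t, s * φ s := by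
  have hIoc : Set.uIoc (0:ℝ) t = Ioc 0 t := uIoc_of_le ht
  have heq : psi g x₀ Y t - x₀ = -∫ s in (0:ℝ)..t, nK t s • g (Y s) := by
    unfold psi; abel
  rw [heq, norm_neg]
  have hint : IntervalIntegrable (fun s => s * φ s) volume 0 t := by
    apply ContinuousOn.intervalIntegrable
    rw [uIcc_of_le ht]; exact continuousOn_id.mul hφ
  have hbd : ∀ᵐ s ∂(volume.restrict (Set.uIoc (0:ℝ) t)), ‖nK t s • g (Y s)‖ ≤ s * φ s := by
    rw [ae_restrict_iff' measurableSet_uIoc]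
    refine ae_of_all _ fun s hs => ?_
    have hs' : s ∈ Ioc 0 t := hIoc ▸ hs
    have hs'' : s ∈ Icc 0 t := Ioc_subset_Icc_self hs'
    rw [norm_smul]
    calc ‖nK t s‖ * ‖g (Y s)‖ ≤ |s| * φ s :=
          mul_le_mul (abs_nK_le hs) (hb s hs'') (norm_nonneg _) (abs_nonneg _)
      _ = s * φ s := by rw [abs_of_pos hs'.1]
  calc ‖∫ s in (0:ℝ)..t, nK t s • g (Y s)‖ ≤ |∫ s in (0:ℝ)..t, s * φ s| :=
        intervalIntegral.norm_integral_le_abs_of_norm_le hbd hint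
    _ = ∫ s in (0:ℝ)..t, s * φ s := by
        apply abs_of_nonneg
        apply intervalIntegral.integral_nonneg ht
        intro u hu
        exact mul_nonneg hu.1 ((norm_nonneg _).trans (hb u hu))


/-- Picard iterates. -/
def pic (j : ℕ) : ℝ → E n := (psi g x₀)^[j] (fun _ => x₀)

lemma pic_zero : pic g x₀ 0 = fun _ => x₀ := rfl

lemma pic_succ (j : ℕ) : pic g x₀ (j+1) = psi g x₀ (pic g x₀ j) :=
  Function.iterate_succ_apply' _ _ _

lemma cont_pic (hg : Continuous g) (j : ℕ) : Continuous (pic g x₀ j) := by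
  induction j with
  | zero => exact continuous_const
  | succ j ih => rw [pic_succ]; exact cont_psi g x₀ hg ih

lemma pic_at_zero (j : ℕ) : pic g x₀ j 0 = x₀ := by
  induction j with
  | zero => rfl
  | succ j ih => rw [pic_succ]; exact psi_zero g x₀ _

/-- The bound on successive Picard differences. -/
def bnd (C₀ L : ℝ) (j : ℕ) (t : ℝ) : ℝ := C₀ * L^j * t^(2*j+2) / (2^(j+1) * (Nat.factorial j))

lemma bnd_eq (C₀ L : ℝ) (j : ℕ) (t : ℝ) :
    bnd C₀ L j t = (C₀ * t^2/2) * ((L*t^2/2)^j / (Nat.factorial j)) := by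
  unfold bnd
  rw [pow_add, pow_mul, div_pow, mul_pow]
  field_simp
  ring

lemma bnd_nonneg {C₀ L : ℝ} (hC : 0 ≤ C₀) (hL : 0 ≤ L) (j : ℕ) {t : ℝ} (ht : 0 ≤ t) :
    0 ≤ bnd C₀ L j t := by unfold bnd; positivity

lemma bnd_mono {C₀ L : ℝ} (hC : 0 ≤ C₀) (hL : 0 ≤ L) (j : ℕ) {t T : ℝ} (ht : 0 ≤ t)
    (htT : t ≤ T) : bnd C₀ L j t ≤ bnd C₀ L j T := by
  unfold bnd
  gcongr

lemma bnd_summable {C₀ L : ℝ} (t : ℝ) : Summable (fun j => bnd C₀ L j t) := by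
  have := (Real.summable_pow_div_factorial (L*t^2/2)).mul_left (C₀ * t^2/2)
  simpa [bnd_eq] using this

lemma cont_bnd (C₀ L : ℝ) (j : ℕ) : Continuous (fun t => bnd C₀ L j t) := by
  unfold bnd; fun_prop

/-- The key estimate on Picard differences. -/
lemma pic_diff_le {L : ℝ} (hL : 0 < L) (hg : Continuous g)
    (hlip : ∀ x y, ‖g x - g y‖ ≤ L * ‖x - y‖) :
    ∀ j : ℕ, ∀ t : ℝ, 0 ≤ t →
      ‖pic g x₀ (j+1) t - pic g x₀ j t‖ ≤ bnd ‖g x₀‖ L j t := by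
  intro j
  induction j with
  | zero =>
    intro t ht
    rw [pic_succ]
    have h := norm_psi_sub_const_le g x₀ hg continuous_const ht
      (φ := fun _ => ‖g x₀‖) continuousOn_const (fun s _ => le_refl _)
    calc ‖psi g x₀ (pic g x₀ 0) t - pic g x₀ 0 t‖ ≤ ∫ s in (0:ℝ)..t, s * ‖g x₀‖ := h
      _ = bnd ‖g x₀‖ L 0 t := by
          rw [intervalIntegral.integral_mul_const, integral_id]
          unfold bnd; simp [Nat.factorial]; ring
  | succ j ih =>
    intro t ht
    rw [show pic g x₀ (j+1+1) = psi g x₀ (pic g x₀ (j+1)) from pic_succ _ _ _]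
    nth_rewrite 2 [pic_succ]
    have hφc : ContinuousOn (fun s => L * bnd ‖g x₀‖ L j s) (Icc 0 t) :=
      (continuous_const.mul (cont_bnd _ _ _)).continuousOn
    have hb : ∀ s ∈ Icc 0 t, ‖g (pic g x₀ (j+1) s) - g (pic g x₀ j s)‖
        ≤ L * bnd ‖g x₀‖ L j s := fun s hs =>
      (hlip _ _).trans (mul_le_mul_of_nonneg_left (ih s hs.1) hL.le)
    have h := norm_psi_sub_psi_le g x₀ hg (cont_pic g x₀ hg (j+1)) (cont_pic g x₀ hg j)
      ht hφc hb
    refine h.trans ?_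
    have heq : ∀ s ∈ uIcc (0:ℝ) t, s * (L * bnd ‖g x₀‖ L j s)
        = (‖g x₀‖ * L^(j+1) / (2^(j+1) * (Nat.factorial j))) * s^(2*j+3) := by
      intro s _
      unfold bnd
      field_simp
      ring
    rw [intervalIntegral.integral_congr heq, intervalIntegral.integral_const_mul,
      integral_pow]
    have hfac : ((Nat.factorial (j+1)) : ℝ) = (j+1) * (Nat.factorial j) := by
      rw [Nat.factorial_succ]; push_cast; ring
    have hK : ((2*j+3 : ℕ) : ℝ) + 1 = 2*(j:ℝ)+4 := by push_cast; ring
    have hexp : 2*j+3+1 = 2*(j+1)+2 := by omega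
    rw [zero_pow (by omega : 2*j+3+1 ≠ 0), sub_zero, hK, hexp, div_mul_div_comm]
    unfold bnd
    apply div_le_div₀ (by positivity) (le_refl _) (by positivity)
    rw [hfac, pow_succ]
    have h1 : (0:ℝ) < 2^(j+1) := by positivity
    have h2 : (0:ℝ) < (Nat.factorial j) := by positivity
    nlinarith [mul_pos h1 h2]


def ExpR (r : ℝ) : ℝ := ∑' m : ℕ, r^m / (Nat.factorial m)

lemma ExpR_nonneg {r : ℝ} (hr : 0 ≤ r) : 0 ≤ ExpR r :=
  tsum_nonneg (fun m => by positivity)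

lemma ExpR_mono {r r' : ℝ} (hr : 0 ≤ r) (hrr' : r ≤ r') : ExpR r ≤ ExpR r' := by
  apply Summable.tsum_le_tsum _ (Real.summable_pow_div_factorial r)
    (Real.summable_pow_div_factorial r')
  intro m
  gcongr

/-- The candidate solution on `[0,∞)`. -/
def Xl : ℝ → E n := fun t => x₀ + ∑' j : ℕ, (pic g x₀ (j+1) t - pic g x₀ j t)

/-- The candidate solution, globally defined. -/
def Xsol : ℝ → E n := fun t => Xl g x₀ (max t 0)

section Limit

variable {L : ℝ} (hL : 0 < L) (hg : Continuous g)
  (hlip : ∀ x y, ‖g x - g y‖ ≤ L * ‖x - y‖)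

include hL hg hlip

lemma pic_diff_summable {t : ℝ} (ht : 0 ≤ t) :
    Summable (fun j => pic g x₀ (j+1) t - pic g x₀ j t) :=
  Summable.of_norm_bounded (bnd_summable t)
    (fun j => pic_diff_le g x₀ hL hg hlip j t ht)

lemma pic_tendsto {t : ℝ} (ht : 0 ≤ t) :
    Tendsto (fun j => pic g x₀ j t) atTop (𝓝 (Xl g x₀ t)) := by
  have hs := (pic_diff_summable g x₀ hL hg hlip ht).hasSum
  have h2 := hs.tendsto_sum_nat
  have h3 : ∀ j : ℕ, ∑ i ∈ Finset.range j, (pic g x₀ (i+1) t - pic g x₀ i t)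
      = pic g x₀ j t - x₀ := by
    intro j
    have := Finset.sum_range_sub (fun i => pic g x₀ i t) j
    simpa [pic_zero] using this
  rw [tendsto_congr h3] at h2
  have h4 := h2.add_const x₀
  simp only [sub_add_cancel] at h4
  have : (∑' j : ℕ, (pic g x₀ (j+1) t - pic g x₀ j t)) + x₀ = Xl g x₀ t := by
    rw [Xl, add_comm]
  rwa [this] at h4

set_option maxHeartbeats 1000000 in
lemma Xl_sub_pic_le {t : ℝ} (ht : 0 ≤ t) (j : ℕ) :
    ‖Xl g x₀ t - pic g x₀ j t‖ ≤ bnd ‖g x₀‖ L j t * ExpR (L*t^2/2) := by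
  have hd : dist (pic g x₀ j t) (Xl g x₀ t) ≤ ∑' m : ℕ, bnd ‖g x₀‖ L (j+m) t := by
    apply dist_le_tsum_of_dist_le_of_tendsto (fun i => bnd ‖g x₀‖ L i t)
      (fun i => ?_) (bnd_summable t) (pic_tendsto g x₀ hL hg hlip ht)
    rw [dist_eq_norm, norm_sub_rev]
    exact pic_diff_le g x₀ hL hg hlip i t ht
  rw [dist_eq_norm, norm_sub_rev] at hd
  refine hd.trans ?_
  have hterm : ∀ m : ℕ, bnd ‖g x₀‖ L (j+m) t
      ≤ bnd ‖g x₀‖ L j t * ((L*t^2/2)^m / (Nat.factorial m)) := by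
    intro m
    rw [bnd_eq, bnd_eq]
    have hr : (0:ℝ) ≤ L*t^2/2 := by positivity
    have hA : (0:ℝ) ≤ ‖g x₀‖ * t^2/2 := by positivity
    have hfac : ((Nat.factorial j : ℝ)) * (Nat.factorial m) ≤ (Nat.factorial (j+m)) := by
      exact_mod_cast Nat.le_of_dvd (Nat.factorial_pos _)
        (Nat.factorial_mul_factorial_dvd_factorial_add j m)
    rw [mul_assoc]
    apply mul_le_mul_of_nonneg_left _ hA
    rw [pow_add, div_mul_div_comm]
    apply div_le_div₀ (by positivity) (le_refl _) (by positivity) hfac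
  calc (∑' m : ℕ, bnd ‖g x₀‖ L (j+m) t)
      ≤ ∑' m : ℕ, bnd ‖g x₀‖ L j t * ((L*t^2/2)^m / (Nat.factorial m)) := by
        apply Summable.tsum_le_tsum hterm
        · have := (summable_nat_add_iff j).2 (bnd_summable (C₀ := ‖g x₀‖) (L := L) t)
          simpa [Nat.add_comm] using this
        · exact (Real.summable_pow_div_factorial _).mul_left _
    _ = bnd ‖g x₀‖ L j t * ExpR (L*t^2/2) := by rw [tsum_mul_left]; rfl

/-- uniform tail bound -/
def ub (C₀ L T : ℝ) (j : ℕ) : ℝ := bnd C₀ L j T * ExpR (L*T^2/2)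

lemma Xl_sub_pic_le_ub {T : ℝ} (hT : 0 ≤ T) {t : ℝ} (htm : t ∈ Icc 0 T) (j : ℕ) :
    ‖Xl g x₀ t - pic g x₀ j t‖ ≤ ub ‖g x₀‖ L T j := by
  refine (Xl_sub_pic_le g x₀ hL hg hlip htm.1 j).trans ?_
  unfold ub
  apply mul_le_mul (bnd_mono (norm_nonneg _) hL.le j htm.1 htm.2)
    (ExpR_mono (by positivity)
      (by have := pow_le_pow_left₀ htm.1 htm.2 2; nlinarith [hL.le]))
    (ExpR_nonneg (by positivity)) (bnd_nonneg (norm_nonneg _) hL.le j hT)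

omit hL hg hlip in
lemma ub_tendsto (T : ℝ) : Tendsto (ub ‖g x₀‖ L T) atTop (𝓝 0) := by
  have := ((bnd_summable (C₀ := ‖g x₀‖) (L := L) T).tendsto_atTop_zero).mul_const
    (ExpR (L*T^2/2))
  rw [zero_mul] at this; exact this

lemma contOn_Xl : ContinuousOn (Xl g x₀) (Ici 0) := by
  intro t ht
  have hT : (0:ℝ) ≤ t+1 := by simp at ht; linarith
  have huni : TendstoUniformlyOn (fun j => pic g x₀ j) (Xl g x₀) atTop (Icc 0 (t+1)) := by
    rw [Metric.tendstoUniformlyOn_iff]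
    intro ε hε
    have hev : ∀ᶠ j in atTop, ub ‖g x₀‖ L (t+1) j < ε :=
      (ub_tendsto (L := L) g x₀ (t+1)).eventually_lt_const hε
    filter_upwards [hev] with j hj t' ht'
    rw [dist_eq_norm]
    exact lt_of_le_of_lt (Xl_sub_pic_le_ub g x₀ hL hg hlip hT ht' j) hj
  have hcOn : ContinuousOn (Xl g x₀) (Icc 0 (t+1)) :=
    huni.continuousOn (Frequently.of_forall fun j => (cont_pic g x₀ hg j).continuousOn)
  have hmem : Icc (0:ℝ) (t+1) ∈ 𝓝[Ici 0] t := by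
    have : Ici (0:ℝ) ∩ Iic (t+1) ∈ 𝓝[Ici 0] t :=
      inter_mem_nhdsWithin _ (Iic_mem_nhds (by simp at ht; linarith))
    rwa [Set.Ici_inter_Iic] at this
  exact (hcOn t ⟨ht, by simp at ht; linarith⟩).mono_of_mem_nhdsWithin hmem

lemma cont_Xsol : Continuous (Xsol g x₀) :=
  (contOn_Xl g x₀ hL hg hlip).comp_continuous (continuous_id.max continuous_const)
    (fun t => le_max_right t 0)

omit hL hg hlip in
lemma Xsol_eq {t : ℝ} (ht : 0 ≤ t) : Xsol g x₀ t = Xl g x₀ t := by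
  simp [Xsol, max_eq_left ht]

omit hL hg hlip in
lemma Xsol_zero : Xsol g x₀ 0 = x₀ := by
  rw [Xsol_eq g x₀ (le_refl 0), Xl]
  simp [pic_at_zero]

/-- The fixed-point property. -/
lemma psi_fix {t : ℝ} (ht : 0 ≤ t) : psi g x₀ (Xsol g x₀) t = Xsol g x₀ t := by
  have key : ∀ j : ℕ, ‖psi g x₀ (Xsol g x₀) t - Xsol g x₀ t‖
      ≤ L * ub ‖g x₀‖ L t j * (t^2/2) + ub ‖g x₀‖ L t (j+1) := by
    intro j
    have h1 : ‖psi g x₀ (Xsol g x₀) t - pic g x₀ (j+1) t‖ ≤ L * ub ‖g x₀‖ L t j * (t^2/2) := by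
      rw [pic_succ]
      have hb : ∀ s ∈ Icc 0 t, ‖g (Xsol g x₀ s) - g (pic g x₀ j s)‖
          ≤ L * ub ‖g x₀‖ L t j := by
        intro s hs
        refine (hlip _ _).trans (mul_le_mul_of_nonneg_left ?_ hL.le)
        rw [Xsol_eq g x₀ hs.1]
        exact Xl_sub_pic_le_ub g x₀ hL hg hlip ht hs j
      have h := norm_psi_sub_psi_le g x₀ hg (cont_Xsol g x₀ hL hg hlip)
        (cont_pic g x₀ hg j) ht continuousOn_const hb
      refine h.trans ?_
      rw [intervalIntegral.integral_mul_const, integral_id]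
      exact le_of_eq (by ring)
    have h2 : ‖pic g x₀ (j+1) t - Xsol g x₀ t‖ ≤ ub ‖g x₀‖ L t (j+1) := by
      rw [Xsol_eq g x₀ ht, norm_sub_rev]
      exact Xl_sub_pic_le_ub g x₀ hL hg hlip ht ⟨ht, le_refl t⟩ (j+1)
    calc ‖psi g x₀ (Xsol g x₀) t - Xsol g x₀ t‖
        ≤ ‖psi g x₀ (Xsol g x₀) t - pic g x₀ (j+1) t‖ + ‖pic g x₀ (j+1) t - Xsol g x₀ t‖ :=
          norm_sub_le_norm_sub_add_norm_sub _ _ _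
      _ ≤ L * ub ‖g x₀‖ L t j * (t^2/2) + ub ‖g x₀‖ L t (j+1) := add_le_add h1 h2
  have htend : Tendsto (fun j => L * ub ‖g x₀‖ L t j * (t^2/2) + ub ‖g x₀‖ L t (j+1))
      atTop (𝓝 0) := by
    have h1 := ((ub_tendsto (L := L) g x₀ t).const_mul L).mul_const (t^2/2)
    have h2 := (ub_tendsto (L := L) g x₀ t).comp (tendsto_add_atTop_nat 1)
    have := h1.add h2
    simpa using this
  have : ‖psi g x₀ (Xsol g x₀) t - Xsol g x₀ t‖ ≤ 0 := ge_of_tendsto' htend key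
  rw [← sub_eq_zero]
  exact norm_le_zero_iff.1 this

/-- The velocity field of the solution. -/
def V (t : ℝ) : E n := -((t^3)⁻¹) • primB g (Xsol g x₀) t


lemma cont_G : Continuous (fun s => g (Xsol g x₀ s)) := hg.comp (cont_Xsol g x₀ hL hg hlip)

lemma hasDerivAt_primB (t : ℝ) :
    HasDerivAt (primB g (Xsol g x₀)) (t^3 • g (Xsol g x₀ t)) t := by
  apply intervalIntegral.integral_hasDerivAt_right
  · exact (((continuous_pow 3).smul (cont_G g x₀ hL hg hlip)).continuousOn).intervalIntegrable
  · exact ((continuous_pow 3).smul (cont_G g x₀ hL hg hlip)).stronglyMeasurable.stronglyMeasurableAtFilter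
  · exact ((continuous_pow 3).smul (cont_G g x₀ hL hg hlip)).continuousAt

lemma hasDerivAt_primA (t : ℝ) :
    HasDerivAt (primA g (Xsol g x₀)) (t • g (Xsol g x₀ t)) t := by
  apply intervalIntegral.integral_hasDerivAt_right
  · exact ((continuous_id.smul (cont_G g x₀ hL hg hlip)).continuousOn).intervalIntegrable
  · exact (continuous_id.smul (cont_G g x₀ hL hg hlip)).stronglyMeasurable.stronglyMeasurableAtFilter
  · exact (continuous_id.smul (cont_G g x₀ hL hg hlip)).continuousAt

lemma hasDerivAt_Xsol {t : ℝ} (ht : 0 < t) :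
    HasDerivAt (Xsol g x₀) (V g x₀ t) t := by
  have heq : ∀ u ∈ Ioi (0:ℝ), Xsol g x₀ u
      = x₀ - (2:ℝ)⁻¹ • primA g (Xsol g x₀) u + (2*u^2)⁻¹ • primB g (Xsol g x₀) u := by
    intro u hu
    rw [← psi_fix g x₀ hL hg hlip (le_of_lt hu), psi_eq g x₀ hg (cont_Xsol g x₀ hL hg hlip) (ne_of_gt hu)]
  have hc : HasDerivAt (fun u : ℝ => (2*u^2)⁻¹) (-(2*(2*t^1)) / (2*t^2)^2) t := by
    exact (((hasDerivAt_pow 2 t).const_mul 2).inv (by positivity)).congr_deriv (by push_cast; ring)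
  have hRHS : HasDerivAt (fun u => x₀ - (2:ℝ)⁻¹ • primA g (Xsol g x₀) u
      + (2*u^2)⁻¹ • primB g (Xsol g x₀) u)
      ((0:E n) - (2:ℝ)⁻¹ • (t • g (Xsol g x₀ t))
        + ((2*t^2)⁻¹ • (t^3 • g (Xsol g x₀ t)) + (-(2*(2*t^1)) / (2*t^2)^2) • primB g (Xsol g x₀) t)) t := by
    exact ((hasDerivAt_const t x₀).sub ((hasDerivAt_primA g x₀ hL hg hlip t).const_smul (2:ℝ)⁻¹)).add
      (hc.smul (hasDerivAt_primB g x₀ hL hg hlip t))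
  have hkey : ((0:E n) - (2:ℝ)⁻¹ • (t • g (Xsol g x₀ t))
        + ((2*t^2)⁻¹ • (t^3 • g (Xsol g x₀ t)) + (-(2*(2*t^1)) / (2*t^2)^2) • primB g (Xsol g x₀) t))
      = V g x₀ t := by
    unfold V
    match_scalars
    · field_simp; ring
    · field_simp
  rw [hkey] at hRHS
  apply hRHS.congr_of_eventuallyEq
  filter_upwards [Ioi_mem_nhds ht] with u hu using heq u hu

lemma deriv_Xsol {t : ℝ} (ht : 0 < t) : deriv (Xsol g x₀) t = V g x₀ t :=
  (hasDerivAt_Xsol g x₀ hL hg hlip ht).deriv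

lemma hasDerivAt_V {t : ℝ} (ht : 0 < t) :
    HasDerivAt (V g x₀) (-((3/t) • V g x₀ t) - g (Xsol g x₀ t)) t := by
  have hc : HasDerivAt (fun u : ℝ => -((u^3)⁻¹)) (-(-(3*t^2) / (t^3)^2)) t :=
    ((hasDerivAt_pow 3 t).inv (pow_ne_zero _ (ne_of_gt ht))).neg.congr_deriv (by push_cast; ring)
  have h := hc.smul (hasDerivAt_primB g x₀ hL hg hlip t)
  have hkey : (-(t^3)⁻¹) • (t^3 • g (Xsol g x₀ t)) + (-(-(3*t^2) / (t^3)^2)) • primB g (Xsol g x₀) t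
      = -((3/t) • V g x₀ t) - g (Xsol g x₀ t) := by
    unfold V
    match_scalars
    · field_simp
    · field_simp
  rw [hkey] at h
  exact h


lemma cont_primB' : Continuous (primB g (Xsol g x₀)) :=
  continuous_iff_continuousAt.2 fun t => (hasDerivAt_primB g x₀ hL hg hlip t).differentiableAt.continuousAt

lemma contDiffOn_V_Ioi : ContDiffOn ℝ 1 (V g x₀) (Ioi 0) := by
  have hB : ContDiff ℝ 1 (primB g (Xsol g x₀)) := by
    rw [contDiff_one_iff_deriv]
    refine ⟨fun t => (hasDerivAt_primB g x₀ hL hg hlip t).differentiableAt, ?_⟩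
    have : deriv (primB g (Xsol g x₀)) = fun t => t^3 • g (Xsol g x₀ t) :=
      funext fun t => (hasDerivAt_primB g x₀ hL hg hlip t).deriv
    rw [this]
    exact (continuous_pow 3).smul (cont_G g x₀ hL hg hlip)
  have h1 : ContDiffOn ℝ 1 (fun u : ℝ => -((u^3)⁻¹)) (Ioi 0) := by
    apply ContDiffOn.neg
    exact ContDiffOn.inv ((contDiff_id.pow 3).contDiffOn)
      (fun u hu => pow_ne_zero _ (ne_of_gt hu))
  exact h1.smul hB.contDiffOn

lemma contDiffOn_Xsol_Ioi : ContDiffOn ℝ 2 (Xsol g x₀) (Ioi 0) := by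
  rw [show ((2:WithTop ℕ∞)) = 1 + 1 by norm_num,
    contDiffOn_succ_iff_deriv_of_isOpen isOpen_Ioi]
  refine ⟨fun t ht => (hasDerivAt_Xsol g x₀ hL hg hlip ht).differentiableAt.differentiableWithinAt,
    by simp, ?_⟩
  exact (contDiffOn_V_Ioi g x₀ hL hg hlip).congr (fun u hu => deriv_Xsol g x₀ hL hg hlip hu)

lemma exists_M : ∃ M, 0 ≤ M ∧ ∀ s ∈ Icc (0:ℝ) 1, ‖g (Xsol g x₀ s)‖ ≤ M := by
  obtain ⟨M, hM⟩ := (isCompact_Icc (a := (0:ℝ)) (b := 1)).exists_bound_of_continuousOn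
    (cont_G g x₀ hL hg hlip).continuousOn
  exact ⟨M, le_trans (norm_nonneg _) (hM 0 ⟨le_refl _, zero_le_one⟩), hM⟩

lemma Xsol_near_zero {M : ℝ} (hM : ∀ s ∈ Icc (0:ℝ) 1, ‖g (Xsol g x₀ s)‖ ≤ M) {t : ℝ}
    (ht : 0 ≤ t) (ht1 : t ≤ 1) : ‖Xsol g x₀ t - x₀‖ ≤ M * t^2 / 2 := by
  rw [← psi_fix g x₀ hL hg hlip ht]
  have h := norm_psi_sub_const_le g x₀ hg (cont_Xsol g x₀ hL hg hlip) ht (φ := fun _ => M)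
    continuousOn_const (fun s hs => hM s ⟨hs.1, hs.2.trans ht1⟩)
  refine h.trans ?_
  rw [intervalIntegral.integral_mul_const, integral_id]
  exact le_of_eq (by ring)

lemma hasDerivWithinAt_zero : HasDerivWithinAt (Xsol g x₀) 0 (Ici 0) 0 := by
  obtain ⟨M, hM0, hM⟩ := exists_M g x₀ hL hg hlip
  rw [hasDerivWithinAt_iff_tendsto_slope]
  apply squeeze_zero_norm' (a := fun t => M * t / 2)
  · have hmem : Ici (0:ℝ) ∩ Iic 1 ∈ 𝓝[Ici 0 \ {0}] 0 :=
      nhdsWithin_mono 0 diff_subset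
        (inter_mem_nhdsWithin _ (Iic_mem_nhds one_pos))
    filter_upwards [hmem, self_mem_nhdsWithin] with t htm hts
    have ht0 : 0 < t := lt_of_le_of_ne hts.1 (Ne.symm (by simpa using hts.2))
    rw [slope_def_module, Xsol_zero, sub_zero, norm_smul, norm_inv]
    rw [Real.norm_eq_abs, abs_of_pos ht0]
    have hle := Xsol_near_zero g x₀ hL hg hlip hM ht0.le htm.2
    calc t⁻¹ * ‖Xsol g x₀ t - x₀‖ ≤ t⁻¹ * (M * t^2 / 2) := by
          exact mul_le_mul_of_nonneg_left hle (by positivity)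
      _ = M * t / 2 := by field_simp
  · have hcont : Continuous (fun t : ℝ => M * t / 2) := by fun_prop
    have h2 : Tendsto (fun t : ℝ => M * t / 2) (𝓝[Ici 0 \ {0}] 0) (𝓝 (M * 0 / 2)) :=
      (hcont.tendsto 0).mono_left nhdsWithin_le_nhds
    simpa using h2

lemma derivWithin_Xsol_zero : derivWithin (Xsol g x₀) (Ici 0) 0 = 0 :=
  (hasDerivWithinAt_zero g x₀ hL hg hlip).derivWithin (uniqueDiffOn_Ici 0 0 Set.self_mem_Ici)

omit hL hg hlip in
lemma V_zero : V g x₀ 0 = 0 := by simp [V]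

lemma contOn_V : ContinuousOn (V g x₀) (Ici 0) := by
  obtain ⟨M, hM0, hM⟩ := exists_M g x₀ hL hg hlip
  intro u hu
  rcases eq_or_lt_of_le (Set.mem_Ici.1 hu) with h0 | h0
  · -- u = 0
    subst h0
    have hbd : ∀ t, t ∈ Ici (0:ℝ) ∩ Iic 1 → ‖V g x₀ t‖ ≤ M * t := by
      intro t htm
      rcases eq_or_lt_of_le (Set.mem_Ici.1 htm.1) with h1 | h1
      · rw [← h1, V_zero]; simp
      · have hB : ‖primB g (Xsol g x₀) t‖ ≤ t^3 * M * |t - 0| := by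
          apply intervalIntegral.norm_integral_le_of_norm_le_const
          intro s hs
          rw [Set.uIoc_of_le htm.1] at hs
          rw [norm_smul, Real.norm_eq_abs, abs_pow, abs_of_pos hs.1]
          have hs1 : s ∈ Icc (0:ℝ) 1 := ⟨hs.1.le, hs.2.trans htm.2⟩
          apply mul_le_mul (pow_le_pow_left₀ hs.1.le hs.2 3) (hM s hs1) (norm_nonneg _)
            (by positivity)
        rw [V, norm_smul, norm_neg, norm_inv, Real.norm_eq_abs, abs_pow, abs_of_pos h1]
        calc (t^3)⁻¹ * ‖primB g (Xsol g x₀) t‖ ≤ (t^3)⁻¹ * (t^3 * M * |t - 0|) :=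
              mul_le_mul_of_nonneg_left hB (by positivity)
          _ = M * t := by rw [sub_zero, abs_of_pos h1]; field_simp
    have : Tendsto (V g x₀) (𝓝[Ici 0] 0) (𝓝 0) := by
      apply squeeze_zero_norm' (a := fun t => M * t)
      · filter_upwards [inter_mem_nhdsWithin (Ici (0:ℝ)) (Iic_mem_nhds one_pos)]
          with t htm using hbd t htm
      · have hcont : Continuous (fun t : ℝ => M * t) := by fun_prop
        have h2 : Tendsto (fun t : ℝ => M * t) (𝓝[Ici 0] 0) (𝓝 (M * 0)) :=
          (hcont.tendsto 0).mono_left nhdsWithin_le_nhds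
        simpa using h2
    rw [ContinuousWithinAt, V_zero]
    exact this
  · -- u > 0
    apply ContinuousAt.continuousWithinAt
    apply ContinuousAt.fun_smul
    · exact (((continuous_pow 3).continuousAt).inv₀ (pow_ne_zero _ (ne_of_gt h0))).neg
    · exact (cont_primB' g x₀ hL hg hlip).continuousAt

lemma derivWithin_Xsol_eq : ∀ u ∈ Ici (0:ℝ),
    derivWithin (Xsol g x₀) (Ici 0) u = V g x₀ u := by
  intro u hu
  rcases eq_or_lt_of_le (Set.mem_Ici.1 hu) with h0 | h0
  · rw [← h0, derivWithin_Xsol_zero g x₀ hL hg hlip, V_zero]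
  · rw [derivWithin_of_mem_nhds (mem_of_superset (Ioi_mem_nhds h0) Ioi_subset_Ici_self)]
    exact deriv_Xsol g x₀ hL hg hlip h0

lemma contDiffOn_Xsol_Ici : ContDiffOn ℝ 1 (Xsol g x₀) (Ici 0) := by
  rw [show ((1:WithTop ℕ∞)) = 0 + 1 by norm_num,
    contDiffOn_succ_iff_derivWithin (uniqueDiffOn_Ici 0)]
  refine ⟨?_, by simp, ?_⟩
  · intro u hu
    rcases eq_or_lt_of_le (Set.mem_Ici.1 hu) with h0 | h0
    · rw [← h0]; exact (hasDerivWithinAt_zero g x₀ hL hg hlip).differentiableWithinAt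
    · exact (hasDerivAt_Xsol g x₀ hL hg hlip h0).differentiableAt.differentiableWithinAt
  · rw [contDiffOn_zero]
    exact (contOn_V g x₀ hL hg hlip).congr (derivWithin_Xsol_eq g x₀ hL hg hlip)

lemma ode_Xsol {t : ℝ} (ht : 0 < t) :
    deriv (deriv (Xsol g x₀)) t + (3/t) • deriv (Xsol g x₀) t + g (Xsol g x₀ t) = 0 := by
  have h1 : deriv (Xsol g x₀) =ᶠ[𝓝 t] V g x₀ := by
    filter_upwards [Ioi_mem_nhds ht] with u hu using deriv_Xsol g x₀ hL hg hlip hu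
  rw [h1.deriv_eq, (hasDerivAt_V g x₀ hL hg hlip ht).deriv, deriv_Xsol g x₀ hL hg hlip ht]
  abel


end Limit

/-- Integral form of Gronwall's inequality. -/
lemma gron {u : ℝ → ℝ} {T c : ℝ} (hu : ContinuousOn u (Icc 0 T)) (hT : 0 ≤ T)
    (hnn : ∀ t ∈ Icc 0 T, 0 ≤ u t) (hc : 0 ≤ c)
    (h : ∀ t ∈ Icc 0 T, u t ≤ c * ∫ s in (0:ℝ)..t, u s) : ∀ t ∈ Icc 0 T, u t = 0 := by
  obtain ⟨D, hD⟩ := (isCompact_Icc (a := (0:ℝ)) (b := T)).exists_bound_of_continuousOn hu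
  have hD' : ∀ t ∈ Icc 0 T, u t ≤ D := fun t ht =>
    (le_abs_self _).trans (by rw [← Real.norm_eq_abs]; exact hD t ht)
  have hD0 : 0 ≤ D := le_trans (hnn 0 ⟨le_refl _, hT⟩) (hD' 0 ⟨le_refl _, hT⟩)
  have key : ∀ k : ℕ, ∀ t ∈ Icc 0 T, u t ≤ D * (c*t)^k / (Nat.factorial k) := by
    intro k
    induction k with
    | zero => simpa using hD'
    | succ k ih =>
      intro t ht
      have hsub : Icc (0:ℝ) t ⊆ Icc 0 T := Icc_subset_Icc (le_refl _) ht.2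
      have hint_u : IntervalIntegrable u volume 0 t := by
        apply ContinuousOn.intervalIntegrable
        rw [uIcc_of_le ht.1]; exact hu.mono hsub
      have hint_b : IntervalIntegrable (fun s => D * (c*s)^k / (Nat.factorial k)) volume 0 t :=
        (Continuous.continuousOn (by fun_prop)).intervalIntegrable
      have h2 : (∫ s in (0:ℝ)..t, u s) ≤ ∫ s in (0:ℝ)..t, D * (c*s)^k / (Nat.factorial k) :=
        intervalIntegral.integral_mono_on ht.1 hint_u hint_b
          (fun s hs => ih s ⟨hs.1, hs.2.trans ht.2⟩)
      have h3 : ∀ s ∈ uIcc (0:ℝ) t, D * (c*s)^k / (Nat.factorial k)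
          = (D * c^k / (Nat.factorial k)) * s^k := by
        intro s _; rw [mul_pow]; ring
      calc u t ≤ c * ∫ s in (0:ℝ)..t, u s := h t ht
        _ ≤ c * ∫ s in (0:ℝ)..t, D * (c*s)^k / (Nat.factorial k) :=
            mul_le_mul_of_nonneg_left h2 hc
        _ = D * (c*t)^(k+1) / (Nat.factorial (k+1)) := by
            rw [intervalIntegral.integral_congr h3, intervalIntegral.integral_const_mul,
              integral_pow, zero_pow (by omega : k+1 ≠ 0), sub_zero]
            rw [Nat.factorial_succ, mul_pow]
            push_cast
            field_simp
            ring
  intro t ht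
  have htend : Tendsto (fun k => D * (c*t)^k / (Nat.factorial k)) atTop (𝓝 0) := by
    have h1 := (Real.summable_pow_div_factorial (c*t)).tendsto_atTop_zero.const_mul D
    simp only [mul_zero] at h1
    apply h1.congr
    intro k; ring
  exact le_antisymm (ge_of_tendsto' htend (fun k => key k t ht)) (hnn t ht)


/-- Any Nesterov solution satisfies the velocity integral identity and
the fundamental theorem of calculus representation. -/
lemma sol_repr (hg : Continuous g) {X : ℝ → E n}
    (hC1 : ContDiffOn ℝ 1 X (Ici 0)) (hC2 : ContDiffOn ℝ 2 X (Ioi 0))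
    (hd0 : derivWithin X (Ici 0) 0 = 0)
    (hode : ∀ t, 0 < t → deriv (deriv X) t + (3/t) • deriv X t + g (X t) = 0) :
    (∀ t, 0 < t → t^3 • derivWithin X (Ici 0) t = -∫ s in (0:ℝ)..t, s^3 • g (X s)) ∧
    (∀ t, 0 ≤ t → X t = X 0 + ∫ s in (0:ℝ)..t, derivWithin X (Ici 0) s) := by
  set DX := derivWithin X (Ici 0) with hDX
  have hXc : ContinuousOn X (Ici 0) := hC1.continuousOn
  have hDXc : ContinuousOn DX (Ici 0) :=
    hC1.continuousOn_derivWithin (uniqueDiffOn_Ici 0) (le_refl 1)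
  have hDXeq : ∀ u : ℝ, 0 < u → DX u = deriv X u := fun u hu =>
    derivWithin_of_mem_nhds (mem_of_superset (Ioi_mem_nhds hu) Ioi_subset_Ici_self)
  have hd : ∀ u : ℝ, 0 < u → HasDerivAt X (deriv X u) u := by
    intro u hu
    have := (hC2.differentiableOn (by norm_num)).differentiableAt (isOpen_Ioi.mem_nhds hu)
    exact this.hasDerivAt
  have hC1d : ContDiffOn ℝ 1 (deriv X) (Ioi 0) := by
    have h2 := (contDiffOn_succ_iff_deriv_of_isOpen (n := 1) isOpen_Ioi).1
      (by rw [show ((1:WithTop ℕ∞)) + 1 = 2 by norm_num]; exact hC2)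
    exact h2.2.2
  have hdd : ∀ u : ℝ, 0 < u → HasDerivAt (deriv X) (deriv (deriv X) u) u := by
    intro u hu
    have := (hC1d.differentiableOn (by norm_num)).differentiableAt (isOpen_Ioi.mem_nhds hu)
    exact this.hasDerivAt
  have hgXc : ContinuousOn (fun s => s^3 • g (X s)) (Ici 0) :=
    (continuous_pow 3).continuousOn.smul (hg.comp_continuousOn hXc)
  -- derivative of W s := s^3 • deriv X s
  have hW : ∀ u : ℝ, 0 < u →
      HasDerivAt (fun v => v^3 • deriv X v) (-(u^3 • g (X u))) u := by
    intro u hu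
    have h1 := (hasDerivAt_pow 3 u).smul (hdd u hu)
    have h2 : deriv (deriv X) u = -((3/u) • deriv X u) - g (X u) := by
      have := hode u hu
      have h3 : deriv (deriv X) u + ((3/u) • deriv X u + g (X u)) = 0 := by
        rw [← add_assoc]; exact this
      have h4 := eq_neg_of_add_eq_zero_left h3
      rw [h4]; abel
    rw [h2] at h1
    refine HasDerivAt.congr_deriv h1 ?_
    have hu' : u ≠ 0 := ne_of_gt hu
    match_scalars
    all_goals (field_simp; try ring)
  constructor
  · -- the W identity
    intro t ht
    have hint : ∀ a b : ℝ, 0 ≤ a → 0 ≤ b →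
        IntervalIntegrable (fun s => s^3 • g (X s)) volume a b := by
      intro a b ha hb
      apply ContinuousOn.intervalIntegrable
      exact hgXc.mono (fun s hs => le_trans (le_min ha hb) hs.1)
    have hIocmem : Ioc (0:ℝ) t ∈ 𝓝[Ioi 0] 0 := by
      have := inter_mem_nhdsWithin (Ioi (0:ℝ)) (Iic_mem_nhds ht)
      rwa [Ioi_inter_Iic] at this
    set P : ℝ → E n := fun a => ∫ s in (0:ℝ)..a, -(s^3 • g (X s)) with hP
    have hconst : ∀ a ∈ Ioc (0:ℝ) t, t^3 • deriv X t - P t = a^3 • deriv X a - P a := by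
      intro a ha
      have hFTC : (∫ s in a..t, -(s^3 • g (X s))) = t^3 • deriv X t - a^3 • deriv X a := by
        apply intervalIntegral.integral_eq_sub_of_hasDerivAt
        · intro x hx
          rw [uIcc_of_le ha.2] at hx
          exact hW x (lt_of_lt_of_le ha.1 hx.1)
        · exact (hint a t ha.1.le ht.le).neg
      have hadd : P a + ∫ s in a..t, -(s^3 • g (X s)) = P t :=
        intervalIntegral.integral_add_adjacent_intervals
          ((hint 0 a (le_refl _) ha.1.le).neg) ((hint a t ha.1.le ht.le).neg)
      rw [← hadd, hFTC]; abel
    have htend0 : Tendsto (fun a => a^3 • deriv X a - P a) (𝓝[Ioi 0] 0) (𝓝 0) := by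
      have h1 : Tendsto (fun a : ℝ => a^3 • deriv X a) (𝓝[Ioi 0] 0) (𝓝 0) := by
        have hsc : Tendsto (fun a : ℝ => a^3) (𝓝[Ioi 0] 0) (𝓝 0) := by
          have := ((continuous_pow 3).tendsto (0:ℝ)).mono_left
            (nhdsWithin_le_nhds (s := Ioi (0:ℝ)))
          simpa using this
        have hDX0 : Tendsto DX (𝓝[Ioi 0] 0) (𝓝 0) := by
          have := (hDXc 0 Set.self_mem_Ici).mono_left
            (nhdsWithin_mono 0 Ioi_subset_Ici_self)
          rwa [hd0] at this
        have := hsc.smul hDX0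
        rw [zero_smul] at this
        apply this.congr'
        filter_upwards [self_mem_nhdsWithin] with a ha
        rw [hDXeq a ha]
      have h2 : Tendsto P (𝓝[Ioi 0] 0) (𝓝 0) := by
        obtain ⟨C, hC⟩ := (isCompact_Icc (a := (0:ℝ)) (b := t)).exists_bound_of_continuousOn
          (hgXc.mono (Icc_subset_Ici_self)).neg
        apply squeeze_zero_norm' (a := fun a => C * |a|)
        · filter_upwards [hIocmem] with a ha
          have : ‖P a‖ ≤ C * |a - 0| := by
            apply intervalIntegral.norm_integral_le_of_norm_le_const
            intro s hs
            rw [Set.uIoc_of_le ha.1.le] at hs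
            exact hC s ⟨hs.1.le, hs.2.trans ha.2⟩
          simpa using this
        · have hcont : Continuous (fun a : ℝ => C * |a|) := by fun_prop
          have h3 : Tendsto (fun a : ℝ => C * |a|) (𝓝[Ioi 0] 0) (𝓝 (C * |0|)) :=
            (hcont.tendsto 0).mono_left nhdsWithin_le_nhds
          simpa using h3
      have := h1.sub h2
      simpa using this
    have htendc : Tendsto (fun a => a^3 • deriv X a - P a) (𝓝[Ioi 0] 0)
        (𝓝 (t^3 • deriv X t - P t)) := by
      apply tendsto_const_nhds.congr'
      filter_upwards [hIocmem] with a ha using (hconst a ha)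
    have hzero : t^3 • deriv X t - P t = 0 := tendsto_nhds_unique htendc htend0
    have : P t = -∫ s in (0:ℝ)..t, s^3 • g (X s) := by
      rw [hP]; simp [intervalIntegral.integral_neg]
    rw [hDXeq t ht, ← this, ← sub_eq_zero]
    exact hzero
  · -- FTC representation
    intro t ht
    rcases eq_or_lt_of_le ht with h0 | h0
    · rw [← h0]; simp
    have hIocmem : Ioc (0:ℝ) t ∈ 𝓝[Ioi 0] 0 := by
      have := inter_mem_nhdsWithin (Ioi (0:ℝ)) (Iic_mem_nhds h0)
      rwa [Ioi_inter_Iic] at this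
    have hintDX : ∀ a b : ℝ, 0 ≤ a → 0 ≤ b → IntervalIntegrable DX volume a b := by
      intro a b ha hb
      apply ContinuousOn.intervalIntegrable
      exact hDXc.mono (fun s hs => le_trans (le_min ha hb) hs.1)
    set Q : ℝ → E n := fun a => ∫ s in (0:ℝ)..a, DX s with hQ
    have hconst : ∀ a ∈ Ioc (0:ℝ) t, X t - Q t = X a - Q a := by
      intro a ha
      have hFTC : (∫ s in a..t, DX s) = X t - X a := by
        apply intervalIntegral.integral_eq_sub_of_hasDerivAt
        · intro x hx
          rw [uIcc_of_le ha.2] at hx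
          have hx0 : 0 < x := lt_of_lt_of_le ha.1 hx.1
          rw [hDXeq x hx0]
          exact hd x hx0
        · exact hintDX a t ha.1.le ht
      have hadd : Q a + ∫ s in a..t, DX s = Q t :=
        intervalIntegral.integral_add_adjacent_intervals
          (hintDX 0 a (le_refl _) ha.1.le) (hintDX a t ha.1.le ht)
      rw [← hadd, hFTC]; abel
    have htend0 : Tendsto (fun a => X a - Q a) (𝓝[Ioi 0] 0) (𝓝 (X 0)) := by
      have h1 : Tendsto X (𝓝[Ioi 0] 0) (𝓝 (X 0)) :=
        (hXc 0 Set.self_mem_Ici).mono_left (nhdsWithin_mono 0 Ioi_subset_Ici_self)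
      have h2 : Tendsto Q (𝓝[Ioi 0] 0) (𝓝 0) := by
        obtain ⟨C, hC⟩ := (isCompact_Icc (a := (0:ℝ)) (b := t)).exists_bound_of_continuousOn
          (hDXc.mono (Icc_subset_Ici_self))
        apply squeeze_zero_norm' (a := fun a => C * |a|)
        · filter_upwards [hIocmem] with a ha
          have : ‖Q a‖ ≤ C * |a - 0| := by
            apply intervalIntegral.norm_integral_le_of_norm_le_const
            intro s hs
            rw [Set.uIoc_of_le ha.1.le] at hs
            exact hC s ⟨hs.1.le, hs.2.trans ha.2⟩
          simpa using this
        · have hcont : Continuous (fun a : ℝ => C * |a|) := by fun_prop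
          have h3 : Tendsto (fun a : ℝ => C * |a|) (𝓝[Ioi 0] 0) (𝓝 (C * |0|)) :=
            (hcont.tendsto 0).mono_left nhdsWithin_le_nhds
          simpa using h3
      have := h1.sub h2
      simpa using this
    have htendc : Tendsto (fun a => X a - Q a) (𝓝[Ioi 0] 0) (𝓝 (X t - Q t)) := by
      apply tendsto_const_nhds.congr'
      filter_upwards [hIocmem] with a ha using (hconst a ha)
    have hzero : X t - Q t = X 0 := tendsto_nhds_unique htendc htend0
    rw [← hzero]; abel


lemma uniqueness {L : ℝ} (hL : 0 < L) (hg : Continuous g)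
    (hlip : ∀ x y, ‖g x - g y‖ ≤ L * ‖x - y‖) {X Y : ℝ → E n}
    (hX1 : ContDiffOn ℝ 1 X (Ici 0)) (hX2 : ContDiffOn ℝ 2 X (Ioi 0))
    (hXd0 : derivWithin X (Ici 0) 0 = 0)
    (hXode : ∀ t, 0 < t → deriv (deriv X) t + (3/t) • deriv X t + g (X t) = 0)
    (hY1 : ContDiffOn ℝ 1 Y (Ici 0)) (hY2 : ContDiffOn ℝ 2 Y (Ioi 0))
    (hYd0 : derivWithin Y (Ici 0) 0 = 0)
    (hYode : ∀ t, 0 < t → deriv (deriv Y) t + (3/t) • deriv Y t + g (Y t) = 0)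
    (hXY0 : X 0 = Y 0) :
    ∀ t, 0 ≤ t → X t = Y t := by
  obtain ⟨hWX, hFX⟩ := sol_repr g hg hX1 hX2 hXd0 hXode
  obtain ⟨hWY, hFY⟩ := sol_repr g hg hY1 hY2 hYd0 hYode
  intro T hT
  set DX := derivWithin X (Ici 0) with hDX
  set DY := derivWithin Y (Ici 0) with hDY
  set u : ℝ → ℝ := fun s => ‖X s - Y s‖ with hu
  have hXc : ContinuousOn X (Ici 0) := hX1.continuousOn
  have hYc : ContinuousOn Y (Ici 0) := hY1.continuousOn
  have hDXc : ContinuousOn DX (Ici 0) :=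
    hX1.continuousOn_derivWithin (uniqueDiffOn_Ici 0) (le_refl 1)
  have hDYc : ContinuousOn DY (Ici 0) :=
    hY1.continuousOn_derivWithin (uniqueDiffOn_Ici 0) (le_refl 1)
  have huIci : ContinuousOn u (Ici 0) := (hXc.sub hYc).norm
  have huc : ContinuousOn u (Icc 0 T) := huIci.mono Icc_subset_Ici_self
  have hunn : ∀ s ∈ Icc (0:ℝ) T, 0 ≤ u s := fun s _ => norm_nonneg _
  have huInt : ∀ a b : ℝ, 0 ≤ a → 0 ≤ b → IntervalIntegrable u volume a b := by
    intro a b ha hb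
    apply ContinuousOn.intervalIntegrable
    exact huIci.mono (fun s hs => le_trans (le_min ha hb) hs.1)
  have hDInt : ∀ (D : ℝ → E n), ContinuousOn D (Ici 0) → ∀ a b : ℝ, 0 ≤ a → 0 ≤ b →
      IntervalIntegrable D volume a b := by
    intro D hD a b ha hb
    apply ContinuousOn.intervalIntegrable
    exact hD.mono (fun s hs => le_trans (le_min ha hb) hs.1)
  -- key pointwise estimate on the velocity difference
  have hvel : ∀ τ, 0 < τ → ∀ s, s ∈ Ioc (0:ℝ) τ →
      ‖DX s - DY s‖ ≤ L * ∫ r in (0:ℝ)..τ, u r := by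
    intro τ hτ s hs
    have hs0 : (0:ℝ) < s := hs.1
    have h1 : IntervalIntegrable (fun r => r^3 • g (X r)) volume 0 s := by
      apply ContinuousOn.intervalIntegrable
      exact (continuous_pow 3).continuousOn.smul (hg.comp_continuousOn
        (hXc.mono (fun r hr => le_trans (le_min (le_refl 0) hs0.le) hr.1)))
    have h2 : IntervalIntegrable (fun r => r^3 • g (Y r)) volume 0 s := by
      apply ContinuousOn.intervalIntegrable
      exact (continuous_pow 3).continuousOn.smul (hg.comp_continuousOn
        (hYc.mono (fun r hr => le_trans (le_min (le_refl 0) hs0.le) hr.1)))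
    have h3 : (∫ r in (0:ℝ)..s, r^3 • (g (X r) - g (Y r)))
        = (∫ r in (0:ℝ)..s, r^3 • g (X r)) - ∫ r in (0:ℝ)..s, r^3 • g (Y r) := by
      rw [← intervalIntegral.integral_sub h1 h2]
      congr 1; ext r; rw [smul_sub]
    have hBdiff : s^3 • (DX s - DY s)
        = -(∫ r in (0:ℝ)..s, r^3 • (g (X r) - g (Y r))) := by
      rw [smul_sub, hWX s hs0, hWY s hs0, h3]
      abel
    have hnorm : s^3 * ‖DX s - DY s‖
        = ‖∫ r in (0:ℝ)..s, r^3 • (g (X r) - g (Y r))‖ := by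
      have h6 := congrArg norm hBdiff
      rw [norm_neg, norm_smul, Real.norm_eq_abs, abs_pow, abs_of_pos hs0] at h6
      exact h6
    have hbInt : IntervalIntegrable (fun r => r^3 * (L * u r)) volume 0 s := by
      apply ContinuousOn.intervalIntegrable
      apply ((continuous_pow 3).continuousOn.mul (continuousOn_const.mul
        (huIci.mono (fun r hr => le_trans (le_min (le_refl 0) hs0.le) hr.1))))
    have hInt1 : ‖∫ r in (0:ℝ)..s, r^3 • (g (X r) - g (Y r))‖
        ≤ ∫ r in (0:ℝ)..s, r^3 * (L * u r) := by
      have hbd : ∀ᵐ r ∂(volume.restrict (Set.uIoc (0:ℝ) s)),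
          ‖r^3 • (g (X r) - g (Y r))‖ ≤ r^3 * (L * u r) := by
        rw [ae_restrict_iff' measurableSet_uIoc]
        refine ae_of_all _ fun r hr => ?_
        rw [Set.uIoc_of_le hs0.le] at hr
        rw [norm_smul, Real.norm_eq_abs, abs_pow, abs_of_pos hr.1]
        exact mul_le_mul_of_nonneg_left (hlip _ _) (pow_nonneg hr.1.le 3)
      refine (intervalIntegral.norm_integral_le_abs_of_norm_le hbd hbInt).trans (le_of_eq ?_)
      apply abs_of_nonneg
      apply intervalIntegral.integral_nonneg hs0.le
      intro r hr
      have h4 : (0:ℝ) ≤ u r := norm_nonneg _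
      exact mul_nonneg (pow_nonneg hr.1 3) (mul_nonneg hL.le h4)
    have hInt2 : (∫ r in (0:ℝ)..s, r^3 * (L * u r))
        ≤ ∫ r in (0:ℝ)..s, s^3 * (L * u r) := by
      apply intervalIntegral.integral_mono_on hs0.le hbInt
      · apply ContinuousOn.intervalIntegrable
        exact continuousOn_const.mul (continuousOn_const.mul
          (huIci.mono (fun r hr => le_trans (le_min (le_refl 0) hs0.le) hr.1)))
      · intro r hr
        have h4 : 0 ≤ u r := norm_nonneg _
        have h5 : r^3 ≤ s^3 := pow_le_pow_left₀ hr.1 hr.2 3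
        nlinarith [mul_nonneg (mul_nonneg hL.le h4) (sub_nonneg.2 h5)]
    have hInt3 : (∫ r in (0:ℝ)..s, s^3 * (L * u r)) = s^3 * (L * ∫ r in (0:ℝ)..s, u r) := by
      rw [intervalIntegral.integral_const_mul, intervalIntegral.integral_const_mul]
    have hInt4 : (∫ r in (0:ℝ)..s, u r) ≤ ∫ r in (0:ℝ)..τ, u r := by
      rw [← intervalIntegral.integral_add_adjacent_intervals (huInt 0 s (le_refl _) hs0.le)
        (huInt s τ hs0.le hτ.le)]
      have : 0 ≤ ∫ r in s..τ, u r :=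
        intervalIntegral.integral_nonneg hs.2 (fun r _ => norm_nonneg _)
      linarith
    have hfinal : s^3 * ‖DX s - DY s‖ ≤ s^3 * (L * ∫ r in (0:ℝ)..τ, u r) := by
      rw [hnorm]
      refine hInt1.trans (hInt2.trans ?_)
      rw [hInt3]
      have := mul_le_mul_of_nonneg_left hInt4 hL.le
      exact mul_le_mul_of_nonneg_left this (by positivity)
    exact le_of_mul_le_mul_left (by simpa [mul_comm] using hfinal) (by positivity : (0:ℝ) < s^3)
  -- main Gronwall inequality
  have hmain : ∀ τ ∈ Icc (0:ℝ) T, u τ ≤ (L*T) * ∫ r in (0:ℝ)..τ, u r := by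
    intro τ hτm
    rcases eq_or_lt_of_le hτm.1 with h0 | h0
    · rw [← h0]; simp [hu, hXY0]
    · have hXint : X τ - Y τ = ∫ s in (0:ℝ)..τ, (DX s - DY s) := by
        rw [intervalIntegral.integral_sub (hDInt DX hDXc 0 τ (le_refl _) hτm.1)
          (hDInt DY hDYc 0 τ (le_refl _) hτm.1)]
        rw [hFX τ hτm.1, hFY τ hτm.1, hXY0]
        abel
      have hIuno : 0 ≤ ∫ r in (0:ℝ)..τ, u r :=
        intervalIntegral.integral_nonneg hτm.1 (fun r _ => norm_nonneg _)
      have hb : ‖∫ s in (0:ℝ)..τ, (DX s - DY s)‖ ≤ (L * ∫ r in (0:ℝ)..τ, u r) * |τ - 0| := by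
        apply intervalIntegral.norm_integral_le_of_norm_le_const
        intro s hs
        rw [Set.uIoc_of_le h0.le] at hs
        exact hvel τ h0 s hs
      calc u τ = ‖∫ s in (0:ℝ)..τ, (DX s - DY s)‖ := by
            show ‖X τ - Y τ‖ = _
            rw [hXint]
        _ ≤ (L * ∫ r in (0:ℝ)..τ, u r) * |τ - 0| := hb
        _ = L * (∫ r in (0:ℝ)..τ, u r) * τ := by rw [sub_zero, abs_of_pos h0]
        _ ≤ (L*T) * ∫ r in (0:ℝ)..τ, u r := by
            nlinarith [mul_nonneg (mul_nonneg hL.le hIuno) (sub_nonneg.2 hτm.2)]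
  have hg0 := gron huc hT hunn (mul_nonneg hL.le hT) hmain T ⟨hT, le_refl _⟩
  have : ‖X T - Y T‖ = 0 := hg0
  rw [norm_eq_zero, sub_eq_zero] at this
  exact this


end Nest

/-- **Theorem 1 (existence and uniqueness).** For any `f ∈ F_L` (`L > 0`) and any starting
point `x₀`, the ODE `Ẍ + (3/t)Ẋ + ∇f(X) = 0`, `X(0) = x₀`, `Ẋ(0) = 0` has a unique global
solution, C² on `(0,∞)` and C¹ on `[0,∞)`. -/
theorem nesterov_ode_exists_unique (n : ℕ) (L : ℝ) (hL : 0 < L) (f : E n → ℝ)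
    (hf : MemFL n L f) (x0 : E n) :
    (∃ X : ℝ → E n, NesterovSol n f x0 X) ∧
      ∀ X Y : ℝ → E n, NesterovSol n f x0 X → NesterovSol n f x0 Y →
        Set.EqOn X Y (Set.Ici 0) := by
  obtain ⟨hconv, hC1f, hlip⟩ := hf
  set g : E n → E n := gradient f with hgdef
  have hgc : Continuous g := by
    have hlipW : LipschitzWith (Real.toNNReal L) g :=
      LipschitzWith.of_dist_le_mul (fun x y => by
        rw [dist_eq_norm, dist_eq_norm, Real.coe_toNNReal L hL.le]
        exact hlip x y)
    exact hlipW.continuous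
  constructor
  · exact ⟨Nest.Xsol g x0, Nest.Xsol_zero g x0, Nest.contDiffOn_Xsol_Ici g x0 hL hgc hlip,
      Nest.contDiffOn_Xsol_Ioi g x0 hL hgc hlip, Nest.derivWithin_Xsol_zero g x0 hL hgc hlip,
      fun t ht => Nest.ode_Xsol g x0 hL hgc hlip ht⟩
  · intro X Y hX hY t ht
    exact Nest.uniqueness g hL hgc hlip hX.2.1 hX.2.2.1 hX.2.2.2.1
      (fun τ hτ => hX.2.2.2.2 τ hτ) hY.2.1 hY.2.2.1 hY.2.2.2.1
      (fun τ hτ => hY.2.2.2.2 τ hτ) (hX.1.trans hY.1.symm) t ht
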